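/- If the degrees d_1 ≤ d_2 ≤ ... ≤ d_n of the vertices of a simple graph on n > k vertices satisfy d_{s+k} ≥ d_s + k for all s = 1, ..., n−k, then a contradiction follows; i.e., there exists some s with d_{s+k} < d_s + k. -/

import Mathlib

open Finset

/-- Sum of `j / k` over `k` consecutive integers starting at `m` equals `m`. -/
lemma aux_ico_div_sum (k : ℕ) (hk : 0 < k) : ∀ m, (∑ j ∈ Finset.Ico m (m + k), j / k) = m := by
  intro m
  induction m with
  | zero =>
    apply Finset.sum_eq_zero
    intro j hj
    rw [Finset.mem_Ico] at hj
    exact Nat.div_eq_of_lt (by omega)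
  | succ m ih =>
    have h1 : (∑ j ∈ Finset.Ico m (m + k + 1), j / k) = m + (m / k + 1) := by
      rw [show m + k + 1 = (m + k) + 1 by omega,
        Finset.sum_Ico_succ_top (by omega) (fun j => j / k), ih, Nat.add_div_right _ hk]
    have h2 : (∑ j ∈ Finset.Ico m (m + k + 1), j / k)
        = m / k + ∑ j ∈ Finset.Ico (m + 1) (m + k + 1), j / k :=
      Finset.sum_eq_sum_Ico_succ_bot (by omega) _
    rw [show m + 1 + k = m + k + 1 by omega]
    linarith

/-- transfer a sum over a top filter of `Fin n` to a sum over `Ico`. -/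
lemma aux_filter_val_sum {n : ℕ} (a : ℕ) (f : ℕ → ℕ) :
    (∑ i ∈ univ.filter (fun i : Fin n => n - a ≤ i.val), f i.val)
      = ∑ j ∈ Finset.Ico (n - a) n, f j := by
  rw [Finset.sum_filter]
  rw [Fin.sum_univ_eq_sum_range (fun j => if n - a ≤ j then f j else 0) n]
  rw [← Finset.sum_filter]
  congr 1
  ext j
  simp only [Finset.mem_filter, Finset.mem_range, Finset.mem_Ico]
  omega

/-- counting lemma: sum of degrees over A is at most a(a-1) plus sum of min(deg, a) outside. -/
lemma aux_count {n : ℕ} (G : SimpleGraph (Fin n)) [DecidableRel G.Adj] (A : Finset (Fin n)) :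
    (∑ v ∈ A, G.degree v) ≤ A.card * (A.card - 1) + ∑ v ∈ Aᶜ, min (G.degree v) A.card := by
  have hnf : ∀ v : Fin n, G.neighborFinset v = univ.filter (G.Adj v) := by
    intro v; ext u; simp
  have hdeg : ∀ v : Fin n,
      G.degree v = (A.filter (G.Adj v)).card + (Aᶜ.filter (G.Adj v)).card := by
    intro v
    rw [← SimpleGraph.card_neighborFinset_eq_degree, hnf]
    rw [← Finset.card_union_of_disjoint
      (Finset.disjoint_filter_filter disjoint_compl_right)]
    congr 1
    rw [← Finset.filter_union, Finset.union_compl]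
  calc (∑ v ∈ A, G.degree v)
      = ∑ v ∈ A, ((A.filter (G.Adj v)).card + (Aᶜ.filter (G.Adj v)).card) := by
        exact Finset.sum_congr rfl fun v _ => hdeg v
    _ ≤ ∑ v ∈ A, ((A.card - 1) + (Aᶜ.filter (G.Adj v)).card) := by
        apply Finset.sum_le_sum
        intro v hv
        apply Nat.add_le_add_right
        have hsub : A.filter (G.Adj v) ⊆ A.erase v := by
          intro u hu
          rw [Finset.mem_filter] at hu
          exact Finset.mem_erase.mpr ⟨hu.2.ne', hu.1⟩
        calc (A.filter (G.Adj v)).card ≤ (A.erase v).card := Finset.card_le_card hsub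
          _ = A.card - 1 := Finset.card_erase_of_mem hv
    _ = A.card * (A.card - 1) + ∑ v ∈ A, (Aᶜ.filter (G.Adj v)).card := by
        rw [Finset.sum_add_distrib, Finset.sum_const, smul_eq_mul]
    _ ≤ A.card * (A.card - 1) + ∑ u ∈ Aᶜ, min (G.degree u) A.card := by
        apply Nat.add_le_add_left
        have hswap : (∑ v ∈ A, (Aᶜ.filter (G.Adj v)).card)
            = ∑ u ∈ Aᶜ, (A.filter (fun v => G.Adj v u)).card := by
          simp only [Finset.card_filter]
          rw [Finset.sum_comm]
        rw [hswap]
        apply Finset.sum_le_sum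
        intro u hu
        apply le_min
        · have : A.filter (fun v => G.Adj v u) ⊆ G.neighborFinset u := by
            intro v hv
            rw [Finset.mem_filter] at hv
            rw [SimpleGraph.mem_neighborFinset]
            exact hv.2.symm
          calc (A.filter (fun v => G.Adj v u)).card ≤ (G.neighborFinset u).card :=
                Finset.card_le_card this
            _ = G.degree u := G.card_neighborFinset_eq_degree u
        · exact Finset.card_le_card (Finset.filter_subset _ _)

lemma aux_chain0 {n k : ℕ} (hk : 1 ≤ k) (hkn : k < n) (d : Fin n → ℕ)
    (H : ∀ (s : ℕ) (h : s + k < n), d ⟨s, Nat.lt_of_le_of_lt (Nat.le_add_right s k) h⟩ + k ≤ d ⟨s + k, h⟩) :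
    ∀ (q r : ℕ) (h : r + k * q < n), d ⟨r, by omega⟩ + k * q ≤ d ⟨r + k * q, h⟩ := by
  intro q
  induction q with
  | zero => intro r h; simp
  | succ q ih =>
    intro r h
    have hlt : r + k * q + k < n := by
      have : k * (q + 1) = k * q + k := by ring
      omega
    have h1 : d ⟨r, by omega⟩ + k * q ≤ d ⟨r + k * q, by omega⟩ := ih r (by omega)
    have h2 : d ⟨r + k * q, by omega⟩ + k ≤ d ⟨r + k * q + k, hlt⟩ := H (r + k * q) hlt
    have heq : d ⟨r + k * q + k, hlt⟩ = d ⟨r + k * (q + 1), h⟩ := by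
      congr 1
      apply Fin.ext
      simp only
      ring
    calc d ⟨r, by omega⟩ + k * (q + 1) = (d ⟨r, by omega⟩ + k * q) + k := by ring
      _ ≤ d ⟨r + k * q, by omega⟩ + k := Nat.add_le_add_right h1 k
      _ ≤ d ⟨r + k * q + k, hlt⟩ := h2
      _ = d ⟨r + k * (q + 1), h⟩ := heq

theorem stmt_1 (n k : ℕ) (hk : 1 ≤ k) (hkn : k < n)
    (G : SimpleGraph (Fin n)) [DecidableRel G.Adj]
    (d : Fin n → ℕ) (hmono : Monotone d)
    (e : Fin n ≃ Fin n) (hd : ∀ i, d i = G.degree (e i)) :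
    ∃ s : ℕ, ∃ h : s + k < n,
      d ⟨s + k, h⟩ < d ⟨s, by omega⟩ + k := by
  by_contra hcon
  push_neg at hcon
  -- hcon : ∀ (s : ℕ) (h : s + k < n), d ⟨s, _⟩ + k ≤ d ⟨s + k, h⟩
  have hk0 : 0 < k := hk
  -- chain lemma specialized
  have chain : ∀ i : Fin n,
      d ⟨i.val % k, lt_trans (Nat.mod_lt _ hk0) hkn⟩ + k * (i.val / k) ≤ d i := by
    intro i
    have hmod : i.val % k + k * (i.val / k) = i.val := Nat.mod_add_div i.val k
    have h := aux_chain0 hk hkn d hcon (i.val / k) (i.val % k) (by omega)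
    have heq : d ⟨i.val % k + k * (i.val / k), by omega⟩ = d i := by
      congr 1; exact Fin.ext hmod
    calc d ⟨i.val % k, lt_trans (Nat.mod_lt _ hk0) hkn⟩ + k * (i.val / k)
        ≤ d ⟨i.val % k + k * (i.val / k), by omega⟩ := h
      _ = d i := heq
  set a := min k (n - k) with ha_def
  have ha1 : 1 ≤ a := le_min hk (by omega)
  have ha2 : a ≤ k := min_le_left _ _
  have ha2' : a ≤ n - k := min_le_right _ _
  have ha3 : 2 * a ≤ n := by omega
  have hchoice : a = k ∨ a = n - k := min_choice k (n - k)
  have ha4 : k ≤ n - a := by omega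
  have ha5 : a * (n - a) = k * (n - k) := by
    rcases hchoice with h | h
    · rw [h]
    · rw [h, show n - (n - k) = k by omega, Nat.mul_comm]
  set S : Finset (Fin n) := univ.filter (fun i => n - a ≤ i.val) with hS_def
  have hScard : S.card = a := by
    have h := aux_filter_val_sum (n := n) a (fun _ => 1)
    rw [Finset.sum_const, Finset.sum_const, Nat.card_Ico, smul_eq_mul, smul_eq_mul,
      mul_one, mul_one, ← hS_def] at h
    omega
  -- φ maps i to i % k
  set φ : Fin n → Fin n := fun i => ⟨i.val % k, lt_trans (Nat.mod_lt _ hk0) hkn⟩ with hφ_def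
  have hinj : ∀ x ∈ S, ∀ y ∈ S, φ x = φ y → x = y := by
    intro x hx y hy hxy
    rw [hS_def, Finset.mem_filter] at hx hy
    have hxv : n - a ≤ x.val := hx.2
    have hyv : n - a ≤ y.val := hy.2
    have hmodeq : x.val % k = y.val % k := by
      have := congrArg Fin.val hxy
      simpa [hφ_def] using this
    have hx' : x.val % k + k * (x.val / k) = x.val := Nat.mod_add_div x.val k
    have hy' : y.val % k + k * (y.val / k) = y.val := Nat.mod_add_div y.val k
    have hxn : x.val < n := x.isLt
    have hyn : y.val < n := y.isLt
    apply Fin.ext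
    rcases lt_trichotomy (x.val / k) (y.val / k) with hq | hq | hq
    · exfalso
      have : k * (x.val / k) + k ≤ k * (y.val / k) := by
        have := Nat.mul_le_mul_left k (Nat.succ_le_of_lt hq)
        rw [Nat.mul_succ] at this
        exact this
      have hna : n ≤ x.val + a := by omega
      linarith
    · rw [hmodeq, hq] at hx'
      linarith [hx', hy']
    · exfalso
      have : k * (y.val / k) + k ≤ k * (x.val / k) := by
        have := Nat.mul_le_mul_left k (Nat.succ_le_of_lt hq)
        rw [Nat.mul_succ] at this
        exact this
      have hna : n ≤ y.val + a := by omega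
      linarith
  set T : Finset (Fin n) := S.image φ with hT_def
  have hTsub : T ⊆ Sᶜ := by
    intro j hj
    rw [hT_def, Finset.mem_image] at hj
    obtain ⟨i, _, rfl⟩ := hj
    rw [Finset.mem_compl, hS_def, Finset.mem_filter]
    simp only [Finset.mem_univ, true_and, not_le, hφ_def]
    have : i.val % k < k := Nat.mod_lt _ hk0
    omega
  have hTcard : T.card = a := by
    rw [hT_def, Finset.card_image_of_injOn (fun x hx y hy hxy => hinj x hx y hy hxy), hScard]
  -- the div-sum computation
  have hdivsum : (∑ i ∈ S, i.val / k) = n - k := by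
    have h := aux_filter_val_sum (n := n) a (fun j => j / k)
    rw [hS_def]
    rw [h]
    rcases hchoice with hcase | hcase
    · have hIco : Finset.Ico (n - a) n = Finset.Ico (n - k) ((n - k) + k) := by
        rw [hcase]; congr 1; omega
      rw [hIco, aux_ico_div_sum k hk0 (n - k)]
    · have hIco : Finset.Ico (n - a) n = Finset.Ico k n := by
        congr 1; omega
      rw [hIco]
      have hone : ∀ j ∈ Finset.Ico k n, j / k = 1 := by
        intro j hj
        rw [Finset.mem_Ico] at hj
        have hjk : j - k < k := by omega
        rw [show j = (j - k) + k by omega, Nat.add_div_right _ hk0, Nat.div_eq_of_lt hjk]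
      rw [Finset.sum_congr rfl hone, Finset.sum_const, Nat.card_Ico, smul_eq_mul, mul_one]
  -- lower bound for the degree sum over S
  have hlow : (∑ j ∈ T, d j) + k * (n - k) ≤ ∑ i ∈ S, d i := by
    have h1 : (∑ i ∈ S, (d (φ i) + k * (i.val / k))) ≤ ∑ i ∈ S, d i :=
      Finset.sum_le_sum fun i _ => chain i
    have h2 : (∑ i ∈ S, (d (φ i) + k * (i.val / k)))
        = (∑ i ∈ S, d (φ i)) + k * (n - k) := by
      rw [Finset.sum_add_distrib, ← Finset.mul_sum, hdivsum]
    have h3 : (∑ j ∈ T, d j) = ∑ i ∈ S, d (φ i) := Finset.sum_image hinj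
    rw [← h3] at h2
    linarith
  -- apply counting lemma to the vertex set image
  set A : Finset (Fin n) := S.map e.toEmbedding with hA_def
  have hAcard : A.card = a := by rw [hA_def, Finset.card_map, hScard]
  have hAsum : (∑ v ∈ A, G.degree v) = ∑ i ∈ S, d i := by
    rw [hA_def, Finset.sum_map]
    exact Finset.sum_congr rfl fun i _ => (hd i).symm
  have hAcompl : Aᶜ = Sᶜ.map e.toEmbedding := by
    ext v
    rw [hA_def, Finset.mem_compl]
    simp [Finset.mem_map_equiv]
  have hAcsum : (∑ v ∈ Aᶜ, min (G.degree v) a) = ∑ j ∈ Sᶜ, min (d j) a := by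
    rw [hAcompl, Finset.sum_map]
    exact Finset.sum_congr rfl fun j _ => by rw [hd]; rfl
  have hcount := aux_count G A
  rw [hAcard, hAsum, hAcsum] at hcount
  -- upper bound the min-sum
  have hSccard : Sᶜ.card = n - a := by
    rw [Finset.card_compl, hScard, Fintype.card_fin]
  have hmin : (∑ j ∈ Sᶜ, min (d j) a) ≤ (∑ j ∈ T, d j) + (n - 2 * a) * a := by
    rw [← Finset.sum_sdiff hTsub]
    have hb1 : (∑ j ∈ Sᶜ \ T, min (d j) a) ≤ (n - 2 * a) * a := by
      calc (∑ j ∈ Sᶜ \ T, min (d j) a) ≤ ∑ _j ∈ Sᶜ \ T, a :=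
            Finset.sum_le_sum fun j _ => min_le_right _ _
        _ = (Sᶜ \ T).card * a := by rw [Finset.sum_const, smul_eq_mul]
        _ = (n - 2 * a) * a := by
            rw [Finset.card_sdiff_of_subset hTsub, hSccard, hTcard]
            congr 1; omega
    have hb2 : (∑ j ∈ T, min (d j) a) ≤ ∑ j ∈ T, d j :=
      Finset.sum_le_sum fun j _ => min_le_left _ _
    linarith
  -- combine everything
  have hfinal : k * (n - k) ≤ a * (a - 1) + (n - 2 * a) * a := by linarith
  -- arithmetic contradiction
  have e1 : a * (a - 1) + (n - 2 * a) * a = a * ((n - a) - 1) := by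
    rw [Nat.mul_comm (n - 2 * a) a, ← Nat.mul_add]
    congr 1
    omega
  have e2 : a * ((n - a) - 1) + a = a * (n - a) := by
    have : (n - a) - 1 + 1 = n - a := by omega
    calc a * ((n - a) - 1) + a = a * (((n - a) - 1) + 1) := by ring
      _ = a * (n - a) := by rw [this]
  rw [e1] at hfinal
  rw [ha5] at e2
  linarith
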